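/- arXiv:1905.08866 — 3 statements merged into one kernel-verified Lean document; each statement's English description precedes it below -/
import Mathlib

section
/- Let p_ξ, p_ν : [0,∞) → (0,∞) be measurable with p_ν locally integrable, and define measures dξ = p_ξ dx and dν = p_ν dx on [0,∞). Suppose B := sup_{x>0} ξ([x,∞)) · ∫₀ˣ (1/p_ν(t)) dt is finite. Then for every continuously differentiable function f on [0,∞) with compact support and f(0) = 0, one has ∫₀^∞ f(x)² p_ξ(x) dx ≤ 4B ∫₀^∞ f'(x)² p_ν(x) dx. -/
open MeasureTheory Filter
open scoped ENNReal

lemma aux_rpow_tail (r : ℝ) (hr : 0 < r) :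
    ∫⁻ l in Set.Ioi r, ENNReal.ofReal ((l ^ 2)⁻¹) = ENNReal.ofReal r⁻¹ := by
  have h1 : ∀ l ∈ Set.Ioi r, ENNReal.ofReal ((l ^ 2)⁻¹) = ENNReal.ofReal (l ^ (-2 : ℝ)) := by
    intro l hl
    have hl0 : 0 < l := hr.trans hl
    rw [Real.rpow_neg hl0.le, Real.rpow_two]
  rw [setLIntegral_congr_fun measurableSet_Ioi h1]
  rw [← ofReal_integral_eq_lintegral_ofReal (integrableOn_Ioi_rpow_of_lt (by norm_num) hr)
    (by filter_upwards [ae_restrict_mem measurableSet_Ioi] with l hl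
        exact Real.rpow_nonneg (le_of_lt (hr.trans hl)) _)]
  · rw [integral_Ioi_rpow_of_lt (by norm_num) hr]
    norm_num
    rw [Real.rpow_neg_one]

lemma aux_sup (ν : Measure ℝ) (hν : ν ≪ (volume : Measure ℝ)) (S : Set ℝ)
    (hSb : BddAbove S) (hSpos : S ⊆ Set.Ioi 0) (C : ℝ≥0∞)
    (hC : ∀ s ∈ S, ν (Set.Ioc 0 s) ≤ C) : ν S ≤ C := by
  rcases S.eq_empty_or_nonempty with rfl | hne
  · simp
  obtain ⟨u, hu_mono, hu_tend, hu_mem⟩ := exists_seq_tendsto_sSup hne hSb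
  have hsub : S ⊆ {sSup S} ∪ ⋃ n, Set.Ioc 0 (u n) := by
    intro s hs
    rcases eq_or_lt_of_le (le_csSup hSb hs) with h | h
    · exact Or.inl h
    · obtain ⟨n, hn⟩ := (hu_tend.eventually (eventually_gt_nhds h)).exists
      exact Or.inr (Set.mem_iUnion.2 ⟨n, hSpos hs, hn.le⟩)
  calc ν S ≤ ν ({sSup S} ∪ ⋃ n, Set.Ioc 0 (u n)) := measure_mono hsub
    _ ≤ ν {sSup S} + ν (⋃ n, Set.Ioc 0 (u n)) := measure_union_le _ _
    _ = ν (⋃ n, Set.Ioc 0 (u n)) := by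
        rw [hν (measure_singleton _), zero_add]
    _ = ⨆ n, ν (Set.Ioc 0 (u n)) := by
        refine Directed.measure_iUnion ?_
        exact (Monotone.directed_le fun m n hmn => Set.Ioc_subset_Ioc_right (hu_mono hmn))
    _ ≤ C := iSup_le fun n => hC _ (hu_mem n)

lemma aux_inf (ν : Measure ℝ) (S : Set ℝ) (t : ℝ) (hne : S.Nonempty)
    (hSub : S ⊆ Set.Ici t) (C : ℝ≥0∞) (hfin : ∀ s : ℝ, ν (Set.Ioc 0 s) ≠ ⊤)
    (hC : ∀ s ∈ S, C ≤ ν (Set.Ioc 0 s)) : C ≤ ν (Set.Ioc 0 (sInf S)) := by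
  have hbdd : BddBelow S := ⟨t, hSub⟩
  obtain ⟨u, hu_anti, hu_tend, hu_mem⟩ := exists_seq_tendsto_sInf hne hbdd
  have hIinter : ⋂ n, Set.Ioc 0 (u n) = Set.Ioc 0 (sInf S) := by
    ext x
    simp only [Set.mem_iInter, Set.mem_Ioc]
    constructor
    · rintro h
      refine ⟨(h 0).1, ge_of_tendsto hu_tend (Eventually.of_forall fun n => (h n).2)⟩
    · rintro ⟨hx0, hx⟩ n
      exact ⟨hx0, hx.trans (csInf_le hbdd (hu_mem n))⟩
  have := Antitone.measure_iInter (s := fun n => Set.Ioc 0 (u n))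
    (fun m n hmn => Set.Ioc_subset_Ioc_right (hu_anti hmn))
    (fun n => measurableSet_Ioc.nullMeasurableSet) ⟨0, hfin _⟩ (μ := ν)
  rw [hIinter] at this
  rw [this]
  exact le_iInf fun n => hC _ (hu_mem n)


lemma aux_cauchy {α : Type*} [MeasurableSpace α] (μ : Measure α) (u v : α → ℝ≥0∞)
    (hu : AEMeasurable u μ) (hv : AEMeasurable v μ) :
    (∫⁻ t, u t * v t ∂μ) ^ 2 ≤ (∫⁻ t, u t ^ 2 ∂μ) * ∫⁻ t, v t ^ 2 ∂μ := by
  have h22 : (2:ℝ).HolderConjugate 2 := Real.HolderConjugate.two_two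
  have h := ENNReal.lintegral_mul_le_Lp_mul_Lq μ h22 hu hv
  simp only [Pi.mul_apply] at h
  have hrpow : ∀ y : ℝ≥0∞, y ^ (2:ℝ) = y ^ (2:ℕ) := fun y => by
    rw [← ENNReal.rpow_natCast y 2]; norm_num
  have hhalf : ∀ a : ℝ≥0∞, (a ^ (1/2 : ℝ)) ^ (2:ℕ) = a := fun a => by
    rw [← ENNReal.rpow_natCast (a ^ (1/2:ℝ)) 2, ← ENNReal.rpow_mul]
    norm_num
  calc (∫⁻ t, u t * v t ∂μ) ^ 2
      ≤ ((∫⁻ t, u t ^ (2:ℝ) ∂μ) ^ (1/2:ℝ) * (∫⁻ t, v t ^ (2:ℝ) ∂μ) ^ (1/2:ℝ)) ^ 2 :=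
        pow_le_pow_left₀ (zero_le) h 2
    _ = (∫⁻ t, u t ^ (2:ℝ) ∂μ) * (∫⁻ t, v t ^ (2:ℝ) ∂μ) := by
        rw [mul_pow, hhalf, hhalf]
    _ = (∫⁻ t, u t ^ 2 ∂μ) * ∫⁻ t, v t ^ 2 ∂μ := by simp_rw [hrpow]

theorem stmt_2 (pxi pnu : ℝ → ℝ)
    (hpxi_meas : Measurable pxi) (hpnu_meas : Measurable pnu)
    (hpxi_pos : ∀ x ∈ Set.Ici (0 : ℝ), 0 < pxi x)
    (hpnu_pos : ∀ x ∈ Set.Ici (0 : ℝ), 0 < pnu x)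
    (hpnu_loc : LocallyIntegrableOn pnu (Set.Ici 0))
    (B : ℝ≥0∞)
    (hB : B = ⨆ x ∈ Set.Ioi (0 : ℝ),
      (∫⁻ t in Set.Ici x, ENNReal.ofReal (pxi t)) *
        ∫⁻ t in Set.Ioc (0 : ℝ) x, ENNReal.ofReal (1 / pnu t))
    (hBfin : B < ⊤)
    (f : ℝ → ℝ) (hf : ContDiff ℝ 1 f) (hf_supp : HasCompactSupport f)
    (hf0 : f 0 = 0) :
    (∫⁻ x in Set.Ici (0 : ℝ), ENNReal.ofReal (f x ^ 2 * pxi x)) ≤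
      4 * B * ∫⁻ x in Set.Ici (0 : ℝ), ENNReal.ofReal (deriv f x ^ 2 * pnu x) := by
  have hg_cont : Continuous (deriv f) := (hf.continuous_deriv le_rfl)
  set g : ℝ → ℝ := deriv f with hgdef
  set w : ℝ → ℝ := fun s => 1 / pnu s with hwdef
  have hw_meas : Measurable w := measurable_const.div hpnu_meas
  set ν : Measure ℝ := (volume : Measure ℝ).withDensity (fun s => ENNReal.ofReal (w s))
    with hνdef
  set ξm : Measure ℝ := (volume : Measure ℝ).withDensity (fun s => ENNReal.ofReal (pxi s))
    with hξdef
  have hν_ac : ν ≪ (volume : Measure ℝ) := withDensity_absolutelyContinuous _ _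
  have hνIoc : ∀ x : ℝ, ν (Set.Ioc 0 x) = ∫⁻ t in Set.Ioc 0 x, ENNReal.ofReal (w t) :=
    fun x => withDensity_apply _ measurableSet_Ioc
  have hξIci : ∀ t : ℝ, ξm (Set.Ici t) = ∫⁻ s in Set.Ici t, ENNReal.ofReal (pxi s) :=
    fun t => withDensity_apply _ measurableSet_Ici
  set H : ℝ → ℝ≥0∞ := fun x => ν (Set.Ioc 0 x) with hHdef
  set X : ℝ → ℝ≥0∞ := fun t => ξm (Set.Ici t) with hXdef
  have key : ∀ x : ℝ, 0 < x → X x * H x ≤ B := by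
    intro x hx
    rw [hB]
    have heq : X x * H x = (∫⁻ t in Set.Ici x, ENNReal.ofReal (pxi t)) *
        ∫⁻ t in Set.Ioc (0 : ℝ) x, ENNReal.ofReal (1 / pnu t) := by
      show ξm (Set.Ici x) * ν (Set.Ioc 0 x) = _
      rw [hξIci, hνIoc]
    rw [heq]
    exact le_iSup₂ (f := fun (x : ℝ) (_ : x ∈ Set.Ioi (0:ℝ)) =>
      (∫⁻ t in Set.Ici x, ENNReal.ofReal (pxi t)) *
        ∫⁻ t in Set.Ioc (0 : ℝ) x, ENNReal.ofReal (1 / pnu t)) x hx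
  have Hmono : Monotone H := fun a b hab => measure_mono (Set.Ioc_subset_Ioc_right hab)
  have Hpos : ∀ x : ℝ, 0 < x → 0 < H x := by
    intro x hx
    have : H x = ∫⁻ t, ENNReal.ofReal (w t) ∂(volume.restrict (Set.Ioc 0 x)) := hνIoc x
    rw [this, lintegral_pos_iff_support hw_meas.ennreal_ofReal]
    have hsub : Set.Ioc 0 x ⊆ Function.support fun t => ENNReal.ofReal (w t) := by
      intro t ht
      simp only [Function.mem_support, ne_eq, ENNReal.ofReal_eq_zero, not_le]
      exact one_div_pos.mpr (hpnu_pos t ht.1.le)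
    have h1 : (0:ℝ≥0∞) < (volume.restrict (Set.Ioc 0 x)) (Set.Ioc 0 x) := by
      rw [Measure.restrict_apply measurableSet_Ioc, Set.inter_self, Real.volume_Ioc]
      simp [hx]
    exact lt_of_lt_of_le h1 (measure_mono hsub)
  have Xpos : ∀ t : ℝ, 0 ≤ t → 0 < X t := by
    intro t ht
    have : X t = ∫⁻ s, ENNReal.ofReal (pxi s) ∂(volume.restrict (Set.Ici t)) := hξIci t
    rw [this, lintegral_pos_iff_support hpxi_meas.ennreal_ofReal]
    have hsub : Set.Ici t ⊆ Function.support fun s => ENNReal.ofReal (pxi s) := by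
      intro s hs
      simp only [Function.mem_support, ne_eq, ENNReal.ofReal_eq_zero, not_le]
      exact hpxi_pos s (le_trans ht hs)
    have h1 : (0:ℝ≥0∞) < (volume.restrict (Set.Ici t)) (Set.Ici t) := by
      rw [Measure.restrict_apply measurableSet_Ici, Set.inter_self, Real.volume_Ici]
      simp
    exact lt_of_lt_of_le h1 (measure_mono hsub)
  have Hfin : ∀ x : ℝ, H x ≠ ⊤ := by
    intro x
    rcases le_or_gt x 0 with h | h
    · rw [hHdef]
      simp only
      rw [Set.Ioc_eq_empty (by simpa using h), measure_empty]
      exact ENNReal.zero_ne_top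
    · intro htop
      have h2 := key x h
      rw [htop, ENNReal.mul_top (Xpos x h.le).ne'] at h2
      exact absurd (lt_of_le_of_lt h2 hBfin) (lt_irrefl _)
  have Xfin : ∀ t : ℝ, 0 < t → X t ≠ ⊤ := by
    intro t ht htop
    have h2 := key t ht
    rw [htop, ENNReal.top_mul (Hpos t ht).ne'] at h2
    exact absurd (lt_of_le_of_lt h2 hBfin) (lt_irrefl _)
  set hr : ℝ → ℝ := fun x => (H x).toReal with hrdef
  have hr_meas : Measurable hr := Hmono.measurable.ennreal_toReal
  have hsqrt_meas : Measurable fun a => Real.sqrt (hr a) :=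
    Real.continuous_sqrt.measurable.comp hr_meas
  have hr_nonneg : ∀ x, 0 ≤ hr x := fun x => ENNReal.toReal_nonneg
  have hr_pos : ∀ x : ℝ, 0 < x → 0 < hr x := fun x hx =>
    ENNReal.toReal_pos (Hpos x hx).ne' (Hfin x)
  have H_eq : ∀ x, H x = ENNReal.ofReal (hr x) := fun x =>
    (ENNReal.ofReal_toReal (Hfin x)).symm
  -- Lemma A
  have lemA : ∀ x : ℝ, 0 < x →
      (∫⁻ t in Set.Ioc 0 x, ENNReal.ofReal (w t / Real.sqrt (hr t))) ≤
        2 * ENNReal.ofReal (Real.sqrt (hr x)) := by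
    intro x hx
    set μA : Measure ℝ := (volume.restrict (Set.Ioc 0 x)).withDensity
      (fun s => ENNReal.ofReal (w s)) with hμA
    have hμA_apply : ∀ U : Set ℝ, MeasurableSet U → μA U = ν (U ∩ Set.Ioc 0 x) := by
      intro U hU
      rw [hμA, withDensity_apply _ hU, Measure.restrict_restrict hU, hνdef,
        withDensity_apply _ (hU.inter measurableSet_Ioc)]
    have hμA_univ : μA Set.univ = H x := by
      rw [hμA_apply _ MeasurableSet.univ, Set.univ_inter]
    haveI : IsFiniteMeasure μA := ⟨by rw [hμA_univ]; exact (Hfin x).lt_top⟩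
    have step1 : (∫⁻ t in Set.Ioc 0 x, ENNReal.ofReal (w t / Real.sqrt (hr t))) =
        ∫⁻ t, ENNReal.ofReal ((Real.sqrt (hr t))⁻¹) ∂μA := by
      rw [hμA, lintegral_withDensity_eq_lintegral_mul _ hw_meas.ennreal_ofReal
        (show Measurable fun t => ENNReal.ofReal ((Real.sqrt (hr t))⁻¹) from hsqrt_meas.inv.ennreal_ofReal)]
      refine setLIntegral_congr_fun measurableSet_Ioc ?_
      intro t ht
      simp only [Pi.mul_apply]
      rw [← ENNReal.ofReal_mul (le_of_lt (one_div_pos.mpr (hpnu_pos t ht.1.le)))]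
      rw [div_eq_mul_inv]
    rw [step1, lintegral_eq_lintegral_meas_lt μA
      (Eventually.of_forall fun a => inv_nonneg.mpr (Real.sqrt_nonneg _))
      (show AEMeasurable (fun t => (Real.sqrt (hr t))⁻¹) μA from hsqrt_meas.inv.aemeasurable)]
    have hrx : 0 < Real.sqrt (hr x) := Real.sqrt_pos.mpr (hr_pos x hx)
    set r : ℝ := (Real.sqrt (hr x))⁻¹ with hrr
    have hrpos : 0 < r := inv_pos.mpr hrx
    have hbound : ∀ l : ℝ, 0 < l → μA {a | l < (Real.sqrt (hr a))⁻¹} ≤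
        min (H x) (ENNReal.ofReal ((l ^ 2)⁻¹)) := by
      intro l hl
      have hU : MeasurableSet {a : ℝ | l < (Real.sqrt (hr a))⁻¹} :=
        measurableSet_lt measurable_const hsqrt_meas.inv
      rw [hμA_apply _ hU]
      refine le_min (le_trans (measure_mono Set.inter_subset_right) le_rfl) ?_
      refine aux_sup ν hν_ac _ ⟨x, fun s hs => hs.2.2⟩ (fun s hs => hs.2.1) _ ?_
      intro s hs
      have h1 : l < (Real.sqrt (hr s))⁻¹ := hs.1
      have h2 : Real.sqrt (hr s) < l⁻¹ := by
        rcases eq_or_lt_of_le (Real.sqrt_nonneg (hr s)) with h | h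
        · rw [← h]; exact inv_pos.mpr hl
        · exact (lt_inv_comm₀ hl h).mp h1
      have h3 : hr s < (l ^ 2)⁻¹ := by
        have hms := mul_self_lt_mul_self (Real.sqrt_nonneg _) h2
        rw [Real.mul_self_sqrt (hr_nonneg s)] at hms
        calc hr s < l⁻¹ * l⁻¹ := hms
          _ = (l ^ 2)⁻¹ := by rw [sq, mul_inv]
      show ν (Set.Ioc 0 s) ≤ _
      have : ν (Set.Ioc 0 s) = ENNReal.ofReal (hr s) := H_eq s
      rw [this]
      exact ENNReal.ofReal_le_ofReal h3.le
    calc (∫⁻ l in Set.Ioi 0, μA {a | l < (Real.sqrt (hr a))⁻¹})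
        = ∫⁻ l in Set.Ioc 0 r ∪ Set.Ioi r, μA {a | l < (Real.sqrt (hr a))⁻¹} := by
          rw [Set.Ioc_union_Ioi_eq_Ioi hrpos.le]
      _ ≤ (∫⁻ l in Set.Ioc 0 r, μA {a | l < (Real.sqrt (hr a))⁻¹}) +
          ∫⁻ l in Set.Ioi r, μA {a | l < (Real.sqrt (hr a))⁻¹} := lintegral_union_le _ _ _
      _ ≤ (∫⁻ _ in Set.Ioc 0 r, H x) + ∫⁻ l in Set.Ioi r, ENNReal.ofReal ((l ^ 2)⁻¹) := by
          refine add_le_add (setLIntegral_mono measurable_const ?_)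
            (setLIntegral_mono ((measurable_id.pow_const 2).inv.ennreal_ofReal) ?_)
          · intro l hl
            exact le_trans (hbound l hl.1) (min_le_left _ _)
          · intro l hl
            exact le_trans (hbound l (hrpos.trans hl)) (min_le_right _ _)
      _ = ENNReal.ofReal (Real.sqrt (hr x)) + ENNReal.ofReal (Real.sqrt (hr x)) := by
          rw [setLIntegral_const, aux_rpow_tail r hrpos, Real.volume_Ioc, sub_zero,
            H_eq x, ← ENNReal.ofReal_mul (hr_nonneg x), hrr, inv_inv]
          congr 1
          rw [← div_eq_mul_inv, Real.div_sqrt]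
      _ = 2 * ENNReal.ofReal (Real.sqrt (hr x)) := (two_mul _).symm
  -- Lemma B
  have lemB : ∀ t : ℝ, 0 < t →
      (∫⁻ s in Set.Ici t, ENNReal.ofReal (Real.sqrt (hr s) * pxi s)) ≤
        2 * (B * ENNReal.ofReal ((Real.sqrt (hr t))⁻¹)) := by
    intro t ht
    set μB : Measure ℝ := (volume.restrict (Set.Ici t)).withDensity
      (fun s => ENNReal.ofReal (pxi s)) with hμB
    have hμB_apply : ∀ U : Set ℝ, MeasurableSet U → μB U = ξm (U ∩ Set.Ici t) := by
      intro U hU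
      rw [hμB, withDensity_apply _ hU, Measure.restrict_restrict hU, hξdef,
        withDensity_apply _ (hU.inter measurableSet_Ici)]
    have hμB_univ : μB Set.univ = X t := by
      rw [hμB_apply _ MeasurableSet.univ, Set.univ_inter]
    haveI : IsFiniteMeasure μB := ⟨by rw [hμB_univ]; exact (Xfin t ht).lt_top⟩
    have step1 : (∫⁻ s in Set.Ici t, ENNReal.ofReal (Real.sqrt (hr s) * pxi s)) =
        ∫⁻ s, ENNReal.ofReal (Real.sqrt (hr s)) ∂μB := by
      rw [hμB, lintegral_withDensity_eq_lintegral_mul _ hpxi_meas.ennreal_ofReal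
        hsqrt_meas.ennreal_ofReal]
      refine setLIntegral_congr_fun measurableSet_Ici ?_
      intro s hs
      simp only [Pi.mul_apply]
      rw [← ENNReal.ofReal_mul (le_of_lt (hpxi_pos s (le_trans ht.le hs))), mul_comm]
    rw [step1, lintegral_eq_lintegral_meas_lt μB
      (Eventually.of_forall fun a => Real.sqrt_nonneg _) hsqrt_meas.aemeasurable]
    have hrt : 0 < Real.sqrt (hr t) := Real.sqrt_pos.mpr (hr_pos t ht)
    set r : ℝ := Real.sqrt (hr t) with hrr
    have hbound : ∀ l : ℝ, 0 < l → μB {a | l < Real.sqrt (hr a)} ≤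
        B / max (H t) (ENNReal.ofReal (l ^ 2)) := by
      intro l hl
      have hU : MeasurableSet {a : ℝ | l < Real.sqrt (hr a)} :=
        measurableSet_lt measurable_const hsqrt_meas
      rw [hμB_apply _ hU]
      set S : Set ℝ := {a | l < Real.sqrt (hr a)} ∩ Set.Ici t with hSdef
      have hmaxne : max (H t) (ENNReal.ofReal (l ^ 2)) ≠ 0 :=
        ne_of_gt (lt_of_lt_of_le (Hpos t ht) (le_max_left _ _))
      have hmaxnt : max (H t) (ENNReal.ofReal (l ^ 2)) ≠ ⊤ := by
        simp [Hfin t]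
      rcases S.eq_empty_or_nonempty with hS | hS
      · rw [hS]; simp
      have hSub : S ⊆ Set.Ici t := Set.inter_subset_right
      have hs0 : t ≤ sInf S := le_csInf hS fun s hs => hSub hs
      have hCle : max (H t) (ENNReal.ofReal (l ^ 2)) ≤ H (sInf S) := by
        refine aux_inf ν S t hS hSub _ (fun s => Hfin s) ?_
        intro s hs
        refine max_le (Hmono (hSub hs)) ?_
        show ENNReal.ofReal (l ^ 2) ≤ ν (Set.Ioc 0 s)
        have hHs : ν (Set.Ioc 0 s) = ENNReal.ofReal (hr s) := H_eq s
        rw [hHs]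
        exact ENNReal.ofReal_le_ofReal ((Real.lt_sqrt hl.le).mp hs.1).le
      have hXle : ξm S ≤ X (sInf S) :=
        measure_mono fun s hs => csInf_le ⟨t, hSub⟩ hs
      have hmul : ξm S * max (H t) (ENNReal.ofReal (l ^ 2)) ≤ B :=
        le_trans (mul_le_mul' hXle hCle) (key (sInf S) (lt_of_lt_of_le ht hs0))
      exact (ENNReal.le_div_iff_mul_le (Or.inl hmaxne) (Or.inl hmaxnt)).mpr hmul
    calc (∫⁻ l in Set.Ioi 0, μB {a | l < Real.sqrt (hr a)})
        = ∫⁻ l in Set.Ioc 0 r ∪ Set.Ioi r, μB {a | l < Real.sqrt (hr a)} := by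
          rw [Set.Ioc_union_Ioi_eq_Ioi hrt.le]
      _ ≤ (∫⁻ l in Set.Ioc 0 r, μB {a | l < Real.sqrt (hr a)}) +
          ∫⁻ l in Set.Ioi r, μB {a | l < Real.sqrt (hr a)} := lintegral_union_le _ _ _
      _ ≤ (∫⁻ _ in Set.Ioc 0 r, B / H t) +
          ∫⁻ l in Set.Ioi r, B * ENNReal.ofReal ((l ^ 2)⁻¹) := by
          refine add_le_add (setLIntegral_mono measurable_const ?_)
            (setLIntegral_mono (measurable_const.mul
              ((measurable_id.pow_const 2).inv.ennreal_ofReal)) ?_)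
          · intro l hl
            exact le_trans (hbound l hl.1)
              (ENNReal.div_le_div_left (le_max_left _ _) _)
          · intro l hl
            have hl0 : 0 < l := hrt.trans hl
            refine le_trans (hbound l hl0) ?_
            calc B / max (H t) (ENNReal.ofReal (l ^ 2))
                ≤ B / ENNReal.ofReal (l ^ 2) :=
                  ENNReal.div_le_div_left (le_max_right _ _) _
              _ = B * ENNReal.ofReal ((l ^ 2)⁻¹) := by
                  rw [div_eq_mul_inv,
                    ENNReal.ofReal_inv_of_pos (by positivity : (0:ℝ) < l ^ 2)]
      _ = B * ENNReal.ofReal ((Real.sqrt (hr t))⁻¹) +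
          B * ENNReal.ofReal ((Real.sqrt (hr t))⁻¹) := by
          have hmeas_inv_sq : Measurable fun l : ℝ => ENNReal.ofReal ((l ^ 2)⁻¹) := by
            fun_prop
          rw [setLIntegral_const, lintegral_const_mul B hmeas_inv_sq,
            aux_rpow_tail r hrt, Real.volume_Ioc, sub_zero]
          congr 1
          rw [div_eq_mul_inv, H_eq t,
            ← ENNReal.ofReal_inv_of_pos (hr_pos t ht), mul_assoc,
            ← ENNReal.ofReal_mul (inv_nonneg.mpr (hr_nonneg t))]
          congr 1
          rw [inv_mul_eq_div, Real.sqrt_div_self', one_div]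
      _ = 2 * (B * ENNReal.ofReal ((Real.sqrt (hr t))⁻¹)) := (two_mul _).symm
  set F : ℝ → ℝ≥0∞ := fun t =>
    ENNReal.ofReal (g t ^ 2 * pnu t) * ENNReal.ofReal (Real.sqrt (hr t)) with hFdef
  have hF_meas : Measurable F :=
    (((hg_cont.pow 2).measurable.mul hpnu_meas).ennreal_ofReal).mul hsqrt_meas.ennreal_ofReal
  set P : ℝ → ℝ≥0∞ := fun s => ENNReal.ofReal (Real.sqrt (hr s) * pxi s) with hPdef
  have hP_meas : Measurable P := (hsqrt_meas.mul hpxi_meas).ennreal_ofReal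
  have hI_mono : Monotone fun x => ∫⁻ t in Set.Ioc 0 x, F t := fun a b hab =>
    lintegral_mono_set (Set.Ioc_subset_Ioc_right hab)
  have hI_meas : Measurable fun x => ∫⁻ t in Set.Ioc 0 x, F t := hI_mono.measurable
  -- Cauchy-Schwarz step
  have CS : ∀ x : ℝ, 0 < x → ENNReal.ofReal (f x ^ 2 * pxi x) ≤
      2 * (∫⁻ t in Set.Ioc 0 x, F t) * P x := by
    intro x hx
    have hfx : f x = ∫ t in (0:ℝ)..x, g t := by
      rw [intervalIntegral.integral_deriv_eq_sub
          (fun t _ => (hf.differentiable one_ne_zero).differentiableAt)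
          (hg_cont.intervalIntegrable 0 x), hf0, sub_zero]
    have habs : |f x| ≤ ∫ t in Set.Ioc 0 x, |g t| := by
      rw [← intervalIntegral.integral_of_le hx.le, hfx]
      exact intervalIntegral.abs_integral_le_integral_abs hx.le
    have hint : IntegrableOn (fun t => |g t|) (Set.Ioc 0 x) volume :=
      (hg_cont.abs.integrableOn_Ioc)
    have habs2 : ENNReal.ofReal (f x ^ 2) ≤
        (∫⁻ t in Set.Ioc 0 x, ENNReal.ofReal |g t|) ^ 2 := by
      rw [← ofReal_integral_eq_lintegral_ofReal hint
        (Eventually.of_forall fun t => abs_nonneg _)]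
      rw [← ENNReal.ofReal_pow (by positivity)]
      apply ENNReal.ofReal_le_ofReal
      calc f x ^ 2 = |f x| ^ 2 := (sq_abs _).symm
        _ ≤ (∫ t in Set.Ioc 0 x, |g t|) ^ 2 := by
            apply pow_le_pow_left₀ (abs_nonneg _) habs
    set k : ℝ → ℝ := fun t => Real.sqrt (hr t) * pnu t with hkdef
    have hk_meas : Measurable k := hsqrt_meas.mul hpnu_meas
    have hkpos : ∀ t ∈ Set.Ioc (0:ℝ) x, 0 < k t := fun t ht =>
      mul_pos (Real.sqrt_pos.mpr (hr_pos t ht.1)) (hpnu_pos t ht.1.le)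
    set u : ℝ → ℝ≥0∞ := fun t => ENNReal.ofReal (|g t| * Real.sqrt (k t)) with hudef
    set v : ℝ → ℝ≥0∞ := fun t => ENNReal.ofReal (Real.sqrt ((k t)⁻¹)) with hvdef
    have hu_meas : Measurable u :=
      ((hg_cont.abs.measurable).mul (Real.continuous_sqrt.measurable.comp hk_meas)).ennreal_ofReal
    have hv_meas : Measurable v :=
      (Real.continuous_sqrt.measurable.comp hk_meas.inv).ennreal_ofReal
    have hprod : (∫⁻ t in Set.Ioc 0 x, ENNReal.ofReal |g t|) =
        ∫⁻ t in Set.Ioc 0 x, u t * v t := by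
      refine setLIntegral_congr_fun measurableSet_Ioc ?_
      intro t ht
      rw [hudef, hvdef]
      simp only
      rw [← ENNReal.ofReal_mul (by positivity)]
      congr 1
      rw [mul_assoc, ← Real.sqrt_mul (le_of_lt (hkpos t ht)),
        mul_inv_cancel₀ (ne_of_gt (hkpos t ht)), Real.sqrt_one, mul_one]
    have hU2 : (∫⁻ t in Set.Ioc 0 x, u t ^ 2) = ∫⁻ t in Set.Ioc 0 x, F t := by
      refine setLIntegral_congr_fun measurableSet_Ioc ?_
      intro t ht
      have hpn : 0 < pnu t := hpnu_pos t ht.1.le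
      rw [hudef, hFdef]
      simp only
      rw [← ENNReal.ofReal_pow (by positivity)]
      have hexp : (|g t| * Real.sqrt (k t)) ^ 2 = g t ^ 2 * pnu t * Real.sqrt (hr t) := by
        rw [mul_pow, sq_abs, Real.sq_sqrt (le_of_lt (hkpos t ht)), hkdef]
        ring
      rw [hexp, ENNReal.ofReal_mul (by positivity)]
    have hV2 : (∫⁻ t in Set.Ioc 0 x, v t ^ 2) ≤ 2 * ENNReal.ofReal (Real.sqrt (hr x)) := by
      have heq : (∫⁻ t in Set.Ioc 0 x, v t ^ 2) =
          ∫⁻ t in Set.Ioc 0 x, ENNReal.ofReal (w t / Real.sqrt (hr t)) := by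
        refine setLIntegral_congr_fun measurableSet_Ioc ?_
        intro t ht
        have hpn : 0 < pnu t := hpnu_pos t ht.1.le
        have hst : Real.sqrt (hr t) ≠ 0 := ne_of_gt (Real.sqrt_pos.mpr (hr_pos t ht.1))
        rw [hvdef]
        simp only
        rw [← ENNReal.ofReal_pow (Real.sqrt_nonneg _),
          Real.sq_sqrt (inv_nonneg.mpr (le_of_lt (hkpos t ht)))]
        congr 1
        rw [hkdef, hwdef]
        simp only
        field_simp
      rw [heq]
      exact lemA x hx
    have hchain : ENNReal.ofReal (f x ^ 2) ≤
        (∫⁻ t in Set.Ioc 0 x, F t) * (2 * ENNReal.ofReal (Real.sqrt (hr x))) := by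
      refine le_trans habs2 ?_
      calc (∫⁻ t in Set.Ioc 0 x, ENNReal.ofReal |g t|) ^ 2
          = (∫⁻ t in Set.Ioc 0 x, u t * v t) ^ 2 := by rw [hprod]
        _ ≤ (∫⁻ t in Set.Ioc 0 x, u t ^ 2) * ∫⁻ t in Set.Ioc 0 x, v t ^ 2 :=
            aux_cauchy _ u v hu_meas.aemeasurable hv_meas.aemeasurable
        _ = (∫⁻ t in Set.Ioc 0 x, F t) * ∫⁻ t in Set.Ioc 0 x, v t ^ 2 := by rw [hU2]
        _ ≤ (∫⁻ t in Set.Ioc 0 x, F t) * (2 * ENNReal.ofReal (Real.sqrt (hr x))) :=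
            mul_le_mul' le_rfl hV2
    calc ENNReal.ofReal (f x ^ 2 * pxi x)
        = ENNReal.ofReal (f x ^ 2) * ENNReal.ofReal (pxi x) :=
          ENNReal.ofReal_mul (by positivity)
      _ ≤ ((∫⁻ t in Set.Ioc 0 x, F t) * (2 * ENNReal.ofReal (Real.sqrt (hr x)))) *
            ENNReal.ofReal (pxi x) := mul_le_mul' hchain le_rfl
      _ = 2 * (∫⁻ t in Set.Ioc 0 x, F t) * P x := by
          rw [hPdef]
          simp only
          rw [ENNReal.ofReal_mul (Real.sqrt_nonneg _)]
          ring
  -- outer reduction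
  have houter : (∫⁻ x in Set.Ici (0:ℝ), ENNReal.ofReal (f x ^ 2 * pxi x)) =
      ∫⁻ x in Set.Ioi (0:ℝ), ENNReal.ofReal (f x ^ 2 * pxi x) := by
    rw [← Measure.restrict_congr_set Ioi_ae_eq_Ici]
  rw [houter]
  -- Fubini setup
  set Q : ℝ → ℝ → ℝ≥0∞ := fun x t =>
    Set.indicator {p : ℝ × ℝ | 0 < p.2 ∧ p.2 ≤ p.1} (fun p => F p.2 * P p.1) (x, t) with hQdef
  have hQm : Measurable (Function.uncurry Q) := by
    have hs : MeasurableSet {p : ℝ × ℝ | 0 < p.2 ∧ p.2 ≤ p.1} :=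
      (measurableSet_lt measurable_const measurable_snd).inter
        (measurableSet_le measurable_snd measurable_fst)
    exact (((hF_meas.comp measurable_snd).mul (hP_meas.comp measurable_fst)).indicator hs)
  have hQeq1 : ∀ x : ℝ, (∫⁻ t in Set.Ioi 0, Q x t) = (∫⁻ t in Set.Ioc 0 x, F t) * P x := by
    intro x
    have hpt : ∀ t : ℝ, Q x t = (Set.Ioc 0 x).indicator (fun t => F t * P x) t := by
      intro t
      simp only [hQdef, Set.indicator_apply, Set.mem_setOf_eq, Set.mem_Ioc]
    simp_rw [hpt]
    rw [lintegral_indicator measurableSet_Ioc, Measure.restrict_restrict measurableSet_Ioc,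
      Set.inter_eq_self_of_subset_left (t := Set.Ioi (0:ℝ)) (fun t ht => Set.mem_Ioi.mpr ht.1),
      lintegral_mul_const' (P x) _ ENNReal.ofReal_ne_top]
  have hQeq2 : ∀ t : ℝ, 0 < t →
      (∫⁻ x in Set.Ioi 0, Q x t) = F t * ∫⁻ s in Set.Ici t, P s := by
    intro t ht
    have hpt : ∀ x : ℝ, Q x t = (Set.Ici t).indicator (fun x => F t * P x) x := by
      intro x
      simp only [hQdef, Set.indicator_apply, Set.mem_setOf_eq, Set.mem_Ici]
      by_cases h : t ≤ x
      · simp [h, ht]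
      · simp [h]
    simp_rw [hpt]
    rw [lintegral_indicator measurableSet_Ici, Measure.restrict_restrict measurableSet_Ici,
      Set.inter_eq_self_of_subset_left (s := Set.Ici t) (t := Set.Ioi (0:ℝ)) (fun s hs => Set.mem_Ioi.mpr (lt_of_lt_of_le ht hs)),
      lintegral_const_mul (F t) hP_meas]
  have hswap : (∫⁻ x in Set.Ioi (0:ℝ), ∫⁻ t in Set.Ioi (0:ℝ), Q x t) =
      ∫⁻ t in Set.Ioi (0:ℝ), ∫⁻ x in Set.Ioi (0:ℝ), Q x t :=
    lintegral_lintegral_swap hQm.aemeasurable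
  have h2Bne : (2 : ℝ≥0∞) * B ≠ ⊤ := ENNReal.mul_ne_top (by norm_num) hBfin.ne
  calc ∫⁻ x in Set.Ioi (0:ℝ), ENNReal.ofReal (f x ^ 2 * pxi x)
      ≤ ∫⁻ x in Set.Ioi (0:ℝ), 2 * ((∫⁻ t in Set.Ioc 0 x, F t) * P x) := by
        refine setLIntegral_mono (measurable_const.mul (hI_meas.mul hP_meas)) ?_
        intro x hx
        rw [← mul_assoc]
        exact CS x hx
    _ = 2 * ∫⁻ x in Set.Ioi (0:ℝ), (∫⁻ t in Set.Ioc 0 x, F t) * P x :=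
        lintegral_const_mul 2 (hI_meas.mul hP_meas)
    _ = 2 * ∫⁻ x in Set.Ioi (0:ℝ), ∫⁻ t in Set.Ioi (0:ℝ), Q x t := by
        congr 1
        refine setLIntegral_congr_fun measurableSet_Ioi
          (fun x _ => ?_)
        exact (hQeq1 x).symm
    _ = 2 * ∫⁻ t in Set.Ioi (0:ℝ), ∫⁻ x in Set.Ioi (0:ℝ), Q x t := by rw [hswap]
    _ = 2 * ∫⁻ t in Set.Ioi (0:ℝ), F t * ∫⁻ s in Set.Ici t, P s := by
        congr 1
        exact setLIntegral_congr_fun measurableSet_Ioi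
          (fun t ht => hQeq2 t ht)
    _ ≤ 2 * ∫⁻ t in Set.Ioi (0:ℝ), ENNReal.ofReal (g t ^ 2 * pnu t) * (2 * B) := by
        refine mul_le_mul' le_rfl (setLIntegral_mono
          ((((hg_cont.pow 2).measurable.mul hpnu_meas).ennreal_ofReal).mul_const _) ?_)
        intro t ht
        have hsp : 0 < Real.sqrt (hr t) := Real.sqrt_pos.mpr (hr_pos t ht)
        have h1 : ENNReal.ofReal (Real.sqrt (hr t)) * (∫⁻ s in Set.Ici t, P s) ≤ 2 * B := by
          refine le_trans (mul_le_mul' le_rfl (lemB t ht)) ?_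
          rw [show ENNReal.ofReal (Real.sqrt (hr t)) *
              (2 * (B * ENNReal.ofReal ((Real.sqrt (hr t))⁻¹))) =
              2 * B * (ENNReal.ofReal (Real.sqrt (hr t)) *
                ENNReal.ofReal ((Real.sqrt (hr t))⁻¹)) from by ring]
          rw [← ENNReal.ofReal_mul (Real.sqrt_nonneg _), mul_inv_cancel₀ (ne_of_gt hsp),
            ENNReal.ofReal_one, mul_one]
        calc F t * ∫⁻ s in Set.Ici t, P s
            = ENNReal.ofReal (g t ^ 2 * pnu t) *
              (ENNReal.ofReal (Real.sqrt (hr t)) * ∫⁻ s in Set.Ici t, P s) := by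
              rw [hFdef]; simp only; rw [mul_assoc]
          _ ≤ ENNReal.ofReal (g t ^ 2 * pnu t) * (2 * B) := mul_le_mul' le_rfl h1
    _ = 2 * ((∫⁻ t in Set.Ioi (0:ℝ), ENNReal.ofReal (g t ^ 2 * pnu t)) * (2 * B)) := by
        rw [lintegral_mul_const' (2 * B) _ h2Bne]
    _ ≤ 4 * B * ∫⁻ x in Set.Ici (0:ℝ), ENNReal.ofReal (g x ^ 2 * pnu x) := by
        rw [show (2:ℝ≥0∞) * ((∫⁻ t in Set.Ioi (0:ℝ), ENNReal.ofReal (g t ^ 2 * pnu t)) * (2 * B))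
            = 4 * B * ∫⁻ t in Set.Ioi (0:ℝ), ENNReal.ofReal (g t ^ 2 * pnu t) from by ring]
        exact mul_le_mul' le_rfl (lintegral_mono_set Set.Ioi_subset_Ici_self)
end

section
/- Let μ be a Borel probability measure on ℝ and C > 0. Suppose that for every smooth function f : ℝ → ℝ of the form f² = 1 + g with g smooth and compactly supported and ∫ g dμ = 0, the log-Sobolev inequality (C/2)·(∫ f² log(f²) dμ) ≤ ∫ (f')² dμ holds. Then for every smooth compactly supported g : ℝ → ℝ with ∫ g dμ = 0, the Poincaré inequality C ∫ g² dμ ≤ ∫ (g')² dμ holds. -/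
open MeasureTheory

lemma log_lb {t : ℝ} (ht : |t| ≤ 1/2) :
    t + t^2/2 - 4*|t|^3 ≤ (1+t) * Real.log (1+t) := by
  have hx : |(-t)| < 1 := by rw [abs_neg]; linarith
  have h := Real.abs_log_sub_add_sum_range_le hx 2
  simp [Finset.sum_range_succ, abs_neg] at h
  norm_num at h
  have h1 : Real.log (1+t) ≥ t - t^2/2 - 2*|t|^3 := by
    have hd : 1 - |t| ≥ 1/2 := by linarith
    have h3 : |t|^3 / (1 - |t|) ≤ 2*|t|^3 := by
      rw [div_le_iff₀ (by linarith)]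
      nlinarith [pow_nonneg (abs_nonneg t) 3, abs_nonneg t]
    have h4 := (abs_le.mp h).1
    nlinarith [h4]
  have ht1 : (0:ℝ) < 1 + t := by cases abs_le.mp ht; linarith
  nlinarith [mul_le_mul_of_nonneg_left h1 (le_of_lt ht1), abs_nonneg t,
    neg_abs_le t, le_abs_self t, pow_nonneg (abs_nonneg t) 3, sq_abs t]

theorem stmt_3 (μ : Measure ℝ) [IsProbabilityMeasure μ] (C : ℝ) (hC : 0 < C)
    (hLS : ∀ f g : ℝ → ℝ, ContDiff ℝ (⊤ : ℕ∞) f → ContDiff ℝ (⊤ : ℕ∞) g →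
      HasCompactSupport g → (∀ x, f x ^ 2 = 1 + g x) → (∫ x, g x ∂μ) = 0 →
      C / 2 * ∫ x, f x ^ 2 * Real.log (f x ^ 2) ∂μ ≤ ∫ x, deriv f x ^ 2 ∂μ) :
    ∀ g : ℝ → ℝ, ContDiff ℝ (⊤ : ℕ∞) g → HasCompactSupport g → (∫ x, g x ∂μ) = 0 →
      C * ∫ x, g x ^ 2 ∂μ ≤ ∫ x, deriv g x ^ 2 ∂μ := by
  intro g hg hgs hgint
  have hgc : Continuous g := hg.continuous
  have hgd : Differentiable ℝ g := hg.differentiable (by simp)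
  have hg'c : Continuous (deriv g) := hg.continuous_deriv (by exact_mod_cast le_top)
  have hg's : HasCompactSupport (deriv g) := hgs.deriv
  obtain ⟨M0, hM0⟩ := hgs.exists_bound_of_continuous hgc
  set M : ℝ := M0 + 1 with hMdef
  have hM1 : (1:ℝ) ≤ M := by
    have := le_trans (norm_nonneg (g 0)) (hM0 0); simp only [hMdef]; linarith
  have hMpos : (0:ℝ) < M := by linarith
  have hMg : ∀ x, |g x| ≤ M := fun x => le_trans (hM0 x) (by linarith)
  have int_g : Integrable g μ := hgc.integrable_of_hasCompactSupport hgs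
  have int_g2 : Integrable (fun x => g x ^ 2) μ :=
    ((hgc.pow 2)).integrable_of_hasCompactSupport
      (hgs.comp_left (g := fun u : ℝ => u ^ 2) (by norm_num) : HasCompactSupport ((fun u : ℝ => u ^ 2) ∘ g))
  have int_g3 : Integrable (fun x => |g x| ^ 3) μ :=
    ((hgc.abs.pow 3)).integrable_of_hasCompactSupport
      (hgs.comp_left (g := fun u : ℝ => |u| ^ 3) (by norm_num) : HasCompactSupport ((fun u : ℝ => |u| ^ 3) ∘ g))
  have int_g'2 : Integrable (fun x => deriv g x ^ 2) μ :=
    ((hg'c.pow 2)).integrable_of_hasCompactSupport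
      (hg's.comp_left (g := fun u : ℝ => u ^ 2) (by norm_num) : HasCompactSupport ((fun u : ℝ => u ^ 2) ∘ deriv g))
  set S := ∫ x, g x ^ 2 ∂μ with hS
  set T := ∫ x, |g x| ^ 3 ∂μ with hT
  set D := ∫ x, deriv g x ^ 2 ∂μ with hD
  have hTnn : 0 ≤ T := integral_nonneg fun x => by positivity
  -- key inequality for small ε
  have key : ∀ ε : ℝ, ε ∈ Set.Ioo 0 (1/(2*M)) →
      C * S ≤ 8*C*ε*T + (1 - ε*M)⁻¹ * D := by
    rintro ε ⟨hε0, hεM⟩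
    have hεM2 : ε * M < 1/2 := by
      have h2M : (0:ℝ) < 2*M := by positivity
      have := (lt_div_iff₀ h2M).mp hεM
      nlinarith
    have hsmall : ∀ x, |ε * g x| ≤ 1/2 := by
      intro x
      rw [abs_mul, abs_of_pos hε0]
      nlinarith [hMg x, abs_nonneg (g x)]
    have hpos : ∀ x, (0:ℝ) < 1 + ε * g x := by
      intro x
      have h1 := neg_abs_le (ε * g x)
      have h2 := hsmall x
      linarith
    set f : ℝ → ℝ := fun x => Real.sqrt (1 + ε * g x) with hfdef
    have hbase : ContDiff ℝ (⊤:ℕ∞) (fun x => 1 + ε * g x) :=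
      contDiff_const.add (contDiff_const.mul hg)
    have hf : ContDiff ℝ (⊤:ℕ∞) f := by
      rw [contDiff_iff_contDiffAt]
      exact fun x => hbase.contDiffAt.sqrt (ne_of_gt (hpos x))
    have hfsq : ∀ x, f x ^ 2 = 1 + ε * g x := fun x => Real.sq_sqrt (hpos x).le
    have hgε : ContDiff ℝ (⊤:ℕ∞) (fun x => ε * g x) := contDiff_const.mul hg
    have hgεs : HasCompactSupport (fun x => ε * g x) :=
      (hgs.comp_left (g := fun u : ℝ => ε * u) (by norm_num) : HasCompactSupport ((fun u : ℝ => ε * u) ∘ g))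
    have hgεint : (∫ x, ε * g x ∂μ) = 0 := by
      rw [integral_const_mul, hgint, mul_zero]
    have hls := hLS f (fun x => ε * g x) hf hgε hgεs hfsq hgεint
    -- derivative of f
    have hfd : ∀ x, HasDerivAt f ((ε * deriv g x) / (2 * Real.sqrt (1 + ε * g x))) x := by
      intro x
      have h1 : HasDerivAt (fun y => 1 + ε * g y) (ε * deriv g x) x :=
        (((hgd x).hasDerivAt.const_mul ε).const_add 1)
      exact h1.sqrt (ne_of_gt (hpos x))
    have hderiv : ∀ x, deriv f x = (ε * deriv g x) / (2 * Real.sqrt (1 + ε * g x)) :=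
      fun x => (hfd x).deriv
    have h1εM : (0:ℝ) < 1 - ε*M := by nlinarith [hεM2]
    -- bound on RHS
    have hRHSpt : ∀ x, deriv f x ^ 2 ≤ (1-ε*M)⁻¹ * (ε^2/4) * deriv g x ^ 2 := by
      intro x
      have he : deriv f x ^ 2 = ε^2 * deriv g x ^2 / (4*(1+ε*g x)) := by
        rw [hderiv x, div_pow, mul_pow, mul_pow, Real.sq_sqrt (hpos x).le]; ring
      rw [he]
      have hstep : ε^2 * deriv g x ^2 / (4*(1+ε*g x)) ≤ ε^2 * deriv g x ^2 / (4*(1-ε*M)) := by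
        apply div_le_div_of_nonneg_left (by positivity) (by linarith)
        have h1 := hMg x
        have h2 := neg_abs_le (g x)
        nlinarith
      refine hstep.trans (le_of_eq ?_)
      field_simp
      try exact Or.inl trivial
    have hRHScs : HasCompactSupport (fun x => deriv f x ^ 2) := by
      have hdc : HasCompactSupport (deriv f) := by
        have heq : deriv f = (fun x => deriv g x) * (fun x => ε / (2 * Real.sqrt (1 + ε * g x))) := by
          funext x; rw [hderiv x]
          have : Real.sqrt (1 + ε * g x) ≠ 0 :=
            ne_of_gt (Real.sqrt_pos.mpr (hpos x))
          simp only [Pi.mul_apply]; field_simp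
        rw [heq]
        exact hg's.mul_right
      exact (hdc.comp_left (g := fun u : ℝ => u ^ 2) (by norm_num) : HasCompactSupport ((fun u : ℝ => u ^ 2) ∘ deriv f))
    have hfderivc : Continuous (deriv f) := hf.continuous_deriv (by exact_mod_cast le_top)
    have int_f'2 : Integrable (fun x => deriv f x ^ 2) μ :=
      (hfderivc.pow 2).integrable_of_hasCompactSupport hRHScs
    have hRHS : (∫ x, deriv f x ^ 2 ∂μ) ≤ (1-ε*M)⁻¹ * (ε^2/4) * D := by
      calc (∫ x, deriv f x ^ 2 ∂μ) ≤ ∫ x, (1-ε*M)⁻¹ * (ε^2/4) * deriv g x ^ 2 ∂μ :=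
            integral_mono int_f'2 (int_g'2.const_mul _) hRHSpt
        _ = (1-ε*M)⁻¹ * (ε^2/4) * D := by rw [integral_const_mul]
    -- bound on LHS (entropy)
    have hLHSpt : ∀ x, ε * g x + (ε*g x)^2/2 - 4*|ε * g x|^3 ≤ f x ^2 * Real.log (f x ^2) := by
      intro x
      rw [hfsq x]
      exact log_lb (hsmall x)
    have hentc : Continuous (fun x => f x ^2 * Real.log (f x ^2)) := by
      have hl : Continuous fun x => Real.log (f x ^ 2) := by
        apply Continuous.log ((hf.continuous).pow 2)
        intro x; rw [Pi.pow_apply, hfsq x]; exact ne_of_gt (hpos x)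
      exact ((hf.continuous).pow 2).mul hl
    have hentcs : HasCompactSupport (fun x => f x ^2 * Real.log (f x ^2)) := by
      apply HasCompactSupport.intro' (hgs.isCompact) hgs.isClosed
      intro x hx
      have hz : g x = 0 := image_eq_zero_of_notMem_tsupport hx
      simp [hfsq x, hz]
    have int_ent : Integrable (fun x => f x ^2 * Real.log (f x ^2)) μ :=
      hentc.integrable_of_hasCompactSupport hentcs
    have i1 : Integrable (fun x => ε * g x) μ := int_g.const_mul ε
    have i2 : Integrable (fun x => (ε*g x)^2/2) μ := by
      have he : (fun x => (ε*g x)^2/2) = fun x => (ε^2/2) * g x ^2 := by funext x; ring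
      rw [he]; exact int_g2.const_mul _
    have i3 : Integrable (fun x => 4*|ε * g x|^3) μ := by
      have he : (fun x => 4*|ε * g x|^3) = fun x => (4*ε^3) * |g x|^3 := by
        funext x; rw [abs_mul, abs_of_pos hε0]; ring
      rw [he]; exact int_g3.const_mul _
    have i12 : Integrable (fun x => ε * g x + (ε*g x)^2/2) μ := by exact i1.add i2
    have int_lower : Integrable (fun x => ε * g x + (ε*g x)^2/2 - 4*|ε * g x|^3) μ := by
      exact i12.sub i3
    have hLHS : ε^2/2 * S - 4*ε^3*T ≤ ∫ x, f x ^2 * Real.log (f x ^2) ∂μ := by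
      have hm := integral_mono int_lower int_ent hLHSpt
      have e2 : (∫ x, (ε*g x)^2/2 ∂μ) = ε^2/2 * S := by
        have he : (fun x => (ε*g x)^2/2) = fun x => (ε^2/2) * g x ^2 := by funext x; ring
        rw [he, integral_const_mul]
      have e3 : (∫ x, 4*|ε * g x|^3 ∂μ) = 4*ε^3 * T := by
        have he : (fun x => 4*|ε * g x|^3) = fun x => (4*ε^3) * |g x|^3 := by
          funext x; rw [abs_mul, abs_of_pos hε0]; ring
        rw [he, integral_const_mul]
      rw [integral_sub i12 i3, integral_add i1 i2, hgεint, e2, e3, zero_add] at hm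
      linarith
    -- combine
    have hchain : C/2 * (ε^2/2 * S - 4*ε^3*T) ≤ (1-ε*M)⁻¹ * (ε^2/4) * D :=
      le_trans (mul_le_mul_of_nonneg_left hLHS (by positivity)) (le_trans hls hRHS)
    rw [← mul_le_mul_iff_left₀ (show (0:ℝ) < ε^2/4 by positivity)]
    calc C*S*(ε^2/4) = C/2*(ε^2/2*S - 4*ε^3*T) + 8*C*ε*T*(ε^2/4) := by ring
      _ ≤ (1-ε*M)⁻¹*(ε^2/4)*D + 8*C*ε*T*(ε^2/4) := by linarith
      _ = (8*C*ε*T + (1-ε*M)⁻¹*D)*(ε^2/4) := by ring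
  -- pass to the limit ε → 0⁺
  have hF : Filter.Tendsto (fun ε : ℝ => 8*C*ε*T + (1 - ε*M)⁻¹ * D)
      (nhdsWithin 0 (Set.Ioi 0)) (nhds D) := by
    have hc : ContinuousAt (fun ε : ℝ => 8*C*ε*T + (1 - ε*M)⁻¹ * D) 0 := by
      apply ContinuousAt.add
      · fun_prop
      · exact (ContinuousAt.inv₀ (by fun_prop) (by norm_num)).mul continuousAt_const
    have ht := hc.continuousWithinAt (s := Set.Ioi 0)
    have ht2 := ht.tendsto
    norm_num at ht2
    exact ht2
  have hev : ∀ᶠ ε in nhdsWithin (0:ℝ) (Set.Ioi 0),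
      C * S ≤ 8*C*ε*T + (1 - ε*M)⁻¹ * D := by
    have hmem : Set.Ioo (0:ℝ) (1/(2*M)) ∈ nhdsWithin (0:ℝ) (Set.Ioi 0) :=
      Ioo_mem_nhdsGT_of_mem ⟨le_refl 0, by positivity⟩
    filter_upwards [hmem] with ε hε
    exact key ε hε
  exact ge_of_tendsto (x := nhdsWithin (0:ℝ) (Set.Ioi 0)) hF hev
end

section
/- Let β > 0 and let x₀ < x₁ be real numbers with (x₁ − x₀)²·β > π². If f : [x₀, x₁] → ℝ is twice continuously differentiable, nonnegative, and satisfies f''(x) + β·f(x) ≤ 0 for all x in (x₀, x₁), then f is identically zero on [x₀, x₁]. -/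
open Set MeasureTheory intervalIntegral

theorem stmt_9 (β x₀ x₁ : ℝ) (hβ : 0 < β) (hx : x₀ < x₁)
    (hlen : Real.pi ^ 2 < (x₁ - x₀) ^ 2 * β)
    (f : ℝ → ℝ) (hf : ContDiffOn ℝ 2 f (Set.Icc x₀ x₁))
    (hfnn : ∀ x ∈ Set.Icc x₀ x₁, 0 ≤ f x)
    (hode : ∀ x ∈ Set.Ioo x₀ x₁, deriv (deriv f) x + β * f x ≤ 0) :
    ∀ x ∈ Set.Icc x₀ x₁, f x = 0 := by
  have hL : (0:ℝ) < x₁ - x₀ := sub_pos.2 hx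
  set k : ℝ := Real.pi / (x₁ - x₀) with hkdef
  have hkpos : 0 < k := div_pos Real.pi_pos hL
  have hkL : k * (x₁ - x₀) = Real.pi := div_mul_cancel₀ _ hL.ne'
  have hk2 : k ^ 2 < β := by
    rw [hkdef, div_pow, div_lt_iff₀ (by positivity)]
    linarith [hlen]
  -- comparison function g and its derivatives
  set g : ℝ → ℝ := fun x => Real.sin (k * (x - x₀)) with hgdef
  set g' : ℝ → ℝ := fun x => k * Real.cos (k * (x - x₀)) with hg'def
  have hgderiv : ∀ x : ℝ, HasDerivAt g (g' x) x := by
    intro x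
    have h1 : HasDerivAt (fun x : ℝ => k * (x - x₀)) k x := by
      simpa using ((hasDerivAt_id x).sub_const x₀).const_mul k
    simpa [hg'def, mul_comm] using h1.sin
  have hg'deriv : ∀ x : ℝ, HasDerivAt g' (-(k ^ 2) * g x) x := by
    intro x
    have h1 : HasDerivAt (fun x : ℝ => k * (x - x₀)) k x := by
      simpa using ((hasDerivAt_id x).sub_const x₀).const_mul k
    have := (h1.cos).const_mul k
    simpa [hg'def, hgdef, pow_two] using this.congr_deriv (by ring)
  have hgcont : Continuous g := by
    fun_prop
  have hgnn : ∀ x ∈ Icc x₀ x₁, 0 ≤ g x := by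
    intro x hx'
    apply Real.sin_nonneg_of_nonneg_of_le_pi
    · nlinarith [hx'.1]
    · rw [← hkL]
      nlinarith [hx'.2]
  have hgpos : ∀ x ∈ Ioo x₀ x₁, 0 < g x := by
    intro x hx'
    apply Real.sin_pos_of_pos_of_lt_pi
    · nlinarith [hx'.1]
    · rw [← hkL]
      nlinarith [hx'.2]
  -- derivatives of f
  set u : ℝ → ℝ := derivWithin f (Icc x₀ x₁) with hudef
  set v : ℝ → ℝ := derivWithin u (Icc x₀ x₁) with hvdef
  have hfc : ContinuousOn f (Icc x₀ x₁) := hf.continuousOn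
  have hucd : ContDiffOn ℝ 1 u (Icc x₀ x₁) :=
    hf.derivWithin (uniqueDiffOn_Icc hx) (by norm_num)
  have hucont : ContinuousOn u (Icc x₀ x₁) := hucd.continuousOn
  have hvcont : ContinuousOn v (Icc x₀ x₁) :=
    hucd.continuousOn_derivWithin (uniqueDiffOn_Icc hx) le_rfl
  have hmemnhds : ∀ x ∈ Ioo x₀ x₁, Icc x₀ x₁ ∈ nhds x := fun x hx' => Icc_mem_nhds hx'.1 hx'.2
  have hfderiv : ∀ x ∈ Ioo x₀ x₁, HasDerivAt f (u x) x := by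
    intro x hx'
    have h1 : DifferentiableAt ℝ f x :=
      (hf.contDiffAt (hmemnhds x hx')).differentiableAt (by norm_num)
    have h2 : u x = deriv f x := derivWithin_of_mem_nhds (hmemnhds x hx')
    rw [h2]; exact h1.hasDerivAt
  have huderiv : ∀ x ∈ Ioo x₀ x₁, HasDerivAt u (v x) x := by
    intro x hx'
    have h1 : DifferentiableAt ℝ u x :=
      (hucd.contDiffAt (hmemnhds x hx')).differentiableAt (by norm_num)
    have h2 : v x = deriv u x := derivWithin_of_mem_nhds (hmemnhds x hx')
    rw [h2]; exact h1.hasDerivAt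
  have hveq : ∀ x ∈ Ioo x₀ x₁, v x = deriv (deriv f) x := by
    intro x hx'
    have h2 : v x = deriv u x := derivWithin_of_mem_nhds (hmemnhds x hx')
    have heq : u =ᶠ[nhds x] deriv f := by
      filter_upwards [Ioo_mem_nhds hx'.1 hx'.2] with y hy
      exact derivWithin_of_mem_nhds (hmemnhds y hy)
    rw [h2, heq.deriv_eq]
  have hvle : ∀ x ∈ Ioo x₀ x₁, v x ≤ -β * f x := by
    intro x hx'
    have := hode x hx'
    rw [hveq x hx'] at *
    linarith
  -- Wronskian
  set W : ℝ → ℝ := fun x => u x * g x - f x * g' x with hWdef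
  set Wd : ℝ → ℝ := fun x => v x * g x + k ^ 2 * (f x * g x) with hWddef
  have hWcont : ContinuousOn W (Icc x₀ x₁) := by
    apply ContinuousOn.sub (hucont.mul hgcont.continuousOn)
    exact hfc.mul (by fun_prop)
  have hWdcont : ContinuousOn Wd (Icc x₀ x₁) := by
    apply ContinuousOn.add (hvcont.mul hgcont.continuousOn)
    exact continuousOn_const.mul (hfc.mul hgcont.continuousOn)
  have hWdint : IntervalIntegrable Wd volume x₀ x₁ :=
    (hWdcont.mono (by rw [uIcc_of_le hx.le])).intervalIntegrable
  have hWderiv : ∀ x ∈ Ioo x₀ x₁, HasDerivAt W (Wd x) x := by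
    intro x hx'
    have h := (((huderiv x hx').mul (hgderiv x)).sub
      ((hfderiv x hx').mul (hg'deriv x)))
    apply h.congr_deriv
    simp only [hWddef]
    ring
  -- FTC
  have hFTC : ∫ y in x₀..x₁, Wd y = W x₁ - W x₀ :=
    integral_eq_sub_of_hasDeriv_right_of_le hx.le hWcont
      (fun x hx' => (hWderiv x hx').hasDerivWithinAt) hWdint
  have hgx₀ : g x₀ = 0 := by simp [hgdef]
  have hgx₁ : g x₁ = 0 := by simp [hgdef, hkL]
  have hg'x₀ : g' x₀ = k := by simp [hg'def]
  have hg'x₁ : g' x₁ = -k := by simp [hg'def, hkL]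
  have hWends : W x₁ - W x₀ = k * (f x₁ + f x₀) := by
    simp only [hWdef, hgx₀, hgx₁, hg'x₀, hg'x₁]
    ring
  -- compare integrals
  set I : ℝ := ∫ y in x₀..x₁, f y * g y with hIdef
  have hfgcont : ContinuousOn (fun y => f y * g y) (Icc x₀ x₁) := hfc.mul hgcont.continuousOn
  have hfgint : IntervalIntegrable (fun y => f y * g y) volume x₀ x₁ :=
    (hfgcont.mono (by rw [uIcc_of_le hx.le])).intervalIntegrable
  have hInn : 0 ≤ I := by
    apply integral_nonneg hx.le
    intro y hy
    exact mul_nonneg (hfnn y hy) (hgnn y hy)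
  have hcomp : ∫ y in x₀..x₁, Wd y ≤ ∫ y in x₀..x₁, (k ^ 2 - β) * (f y * g y) := by
    apply integral_mono_on hx.le hWdint (hfgint.const_mul _)
    intro y hy
    rcases eq_or_lt_of_le hy.1 with h0 | h0
    · simp [hWddef, ← h0, hgx₀]
    rcases eq_or_lt_of_le hy.2 with h1 | h1
    · simp [hWddef, h1, hgx₁]
    have hyIoo : y ∈ Ioo x₀ x₁ := ⟨h0, h1⟩
    have h2 := hvle y hyIoo
    have h3 := hgpos y hyIoo
    have h4 := hfnn y hy
    simp only [hWddef]
    nlinarith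
  rw [intervalIntegral.integral_const_mul] at hcomp
  rw [hFTC, hWends, ← hIdef] at hcomp
  have hkI : (k ^ 2 - β) * I ≤ 0 :=
    mul_nonpos_of_nonpos_of_nonneg (by linarith) hInn
  have hfx₀ : f x₀ = 0 ∧ f x₁ = 0 := by
    have h1 := hfnn x₀ ⟨le_refl _, hx.le⟩
    have h2 := hfnn x₁ ⟨hx.le, le_refl _⟩
    have hsum : f x₁ + f x₀ ≤ 0 := by
      rcases mul_nonpos_iff.1 (le_trans hcomp hkI) with ⟨h, h'⟩ | ⟨h, h'⟩
      · linarith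
      · linarith
    constructor <;> linarith
  have hIzero : I = 0 := by
    have h1 : 0 ≤ (k ^ 2 - β) * I := by
      rw [hfx₀.1, hfx₀.2] at hcomp; linarith
    have : (k ^ 2 - β) * I = 0 := le_antisymm hkI h1
    have hne : k ^ 2 - β ≠ 0 := by linarith
    exact (mul_eq_zero.1 this).resolve_left hne
  -- conclude
  intro x hx'
  rcases eq_or_lt_of_le hx'.1 with h0 | h0
  · rw [← h0]; exact hfx₀.1
  rcases eq_or_lt_of_le hx'.2 with h1 | h1
  · rw [h1]; exact hfx₀.2
  have hxIoo : x ∈ Ioo x₀ x₁ := ⟨h0, h1⟩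
  by_contra hne
  have hfxpos : 0 < f x := lt_of_le_of_ne (hfnn x hx') (Ne.symm hne)
  have hFx : 0 < f x * g x := mul_pos hfxpos (hgpos x hxIoo)
  have hca : ContinuousAt (fun y => f y * g y) x :=
    hfgcont.continuousAt (hmemnhds x hxIoo)
  have hev : ∀ᶠ y in nhds x, 0 < f y * g y := hca.eventually (eventually_gt_nhds hFx)
  obtain ⟨a, b, hab, hsub⟩ := mem_nhds_iff_exists_Ioo_subset.1
    (Filter.inter_mem hev (Ioo_mem_nhds hxIoo.1 hxIoo.2))
  set a' := max a x₀ with ha'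
  set b' := min b x₁ with hb'
  have hxa' : a' < x := max_lt hab.1 hxIoo.1
  have hxb' : x < b' := lt_min hab.2 hxIoo.2
  have hsub' : Ioo a' b' ⊆ Ioo a b := Ioo_subset_Ioo (le_max_left _ _) (min_le_left _ _)
  have hpos' : ∀ y ∈ Ioo a' b', 0 < f y * g y := fun y hy => (hsub (hsub' hy)).1
  have hIcc' : Icc a' b' ⊆ Icc x₀ x₁ := Icc_subset_Icc (le_max_right _ _) (min_le_right _ _)
  have hint' : IntervalIntegrable (fun y => f y * g y) volume a' b' := by
    apply ContinuousOn.intervalIntegrable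
    rw [uIcc_of_le (hxa'.trans hxb').le]
    exact hfgcont.mono hIcc'
  have hposint : 0 < ∫ y in a'..b', f y * g y :=
    intervalIntegral_pos_of_pos_on hint' hpos' (hxa'.trans hxb')
  have hmono : (∫ y in a'..b', f y * g y) ≤ I := by
    apply integral_mono_interval (le_max_right _ _) (hxa'.trans hxb').le (min_le_right _ _)
    · rw [Filter.EventuallyLE, ae_restrict_iff' measurableSet_Ioc]
      filter_upwards with y hy
      simpa using mul_nonneg (hfnn y (Ioc_subset_Icc_self hy)) (hgnn y (Ioc_subset_Icc_self hy))
    · exact hfgint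
  linarith [hIzero ▸ hmono, hposint]
end
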